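/- Under the hypotheses of the previous setting with multiple players i = 1,...,m — each player's gradient map being β_i-Lipschitz in data and each distribution map D_i being ε_i-sensitive, with the joint map G_θ α-strongly monotone — if Σ_{i=1}^m (β_i ε_i / α)² < 1, then the solution map sol(θ) is a contraction with constant C = sqrt(Σ_{i=1}^m (β_i ε_i / α)²) < 1, and hence there exists a unique stable equilibrium θ_PS with sol(θ_PS) = θ_PS. -/

import Mathlib

open MeasureTheory

abbrev MPE (m : ℕ) (d : Fin m → ℕ) :=
  PiLp 2 (fun i : Fin m => EuclideanSpace ℝ (Fin (d i)))

/-- Multiplayer setting: if each player's gradient map G_i is β_i-Lipschitz in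
the data, each distribution map D_i is ε_i-sensitive in W₁, the joint map
G_θ(y) = (E_{Z^i∼D_i(θ)} G_i(y, Z^i))_i is α-strongly monotone in y, and
Σ_i (β_i ε_i / α)² < 1, then the solution map sol is a contraction with
constant C = sqrt(Σ_i (β_i ε_i / α)²) < 1, and there exists a unique stable
equilibrium θ_PS with sol(θ_PS) = θ_PS. -/
theorem multiplayer_stable_equilibrium
    {m : ℕ} {d : Fin m → ℕ}
    {Z : Fin m → Type*} [∀ i, MetricSpace (Z i)] [∀ i, MeasurableSpace (Z i)]
    [∀ i, BorelSpace (Z i)]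
    -- the joint parameter space E = Θ₁ × ... × Θ_m sits inside the ℓ² product
    (Θ : Set (PiLp 2 (fun i : Fin m => EuclideanSpace ℝ (Fin (d i)))))
    (hΘconv : Convex ℝ Θ) (hΘne : Θ.Nonempty) (hΘcl : IsClosed Θ)
    (D : (i : Fin m) → PiLp 2 (fun i : Fin m => EuclideanSpace ℝ (Fin (d i))) → Measure (Z i))
    (hprob : ∀ i θ, IsProbabilityMeasure (D i θ))
    (G : (i : Fin m) → PiLp 2 (fun i : Fin m => EuclideanSpace ℝ (Fin (d i))) →
      Z i → EuclideanSpace ℝ (Fin (d i)))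
    (hint : ∀ i y θ, Integrable (G i y) (D i θ))
    (α : ℝ) (β ε : Fin m → ℝ)
    (hα : 0 < α) (hβ : ∀ i, 0 < β i) (hε : ∀ i, 0 ≤ ε i)
    -- each G_i(y, ·) is β_i-Lipschitz in the data z^i
    (hLipz : ∀ i y, ∀ z z' : Z i, ‖G i y z - G i y z'‖ ≤ β i * dist z z')
    -- each D_i is ε_i-sensitive in W₁ (Kantorovich–Rubinstein duality form)
    (hsens : ∀ i θ θ', ∀ f : Z i → ℝ, LipschitzWith 1 f →
      (∫ z, f z ∂(D i θ)) - (∫ z, f z ∂(D i θ')) ≤ ε i * ‖θ - θ'‖)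
    -- the joint map G_θ(y) is α-strongly monotone in y
    (hmono : ∀ θ, ∀ y₁ ∈ Θ, ∀ y₂ ∈ Θ,
      α * ‖y₁ - y₂‖ ^ 2 ≤
        @inner ℝ (PiLp 2 (fun i : Fin m => EuclideanSpace ℝ (Fin (d i)))) _
          (((WithLp.toLp 2 (fun i => ∫ z, G i y₁ z ∂(D i θ))) :
            PiLp 2 (fun i : Fin m => EuclideanSpace ℝ (Fin (d i)))) -
          ((WithLp.toLp 2 (fun i => ∫ z, G i y₂ z ∂(D i θ))) :
            PiLp 2 (fun i : Fin m => EuclideanSpace ℝ (Fin (d i)))))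
          (y₁ - y₂))
    -- sol(θ) is the unique zero of the joint map G_θ in Θ
    (sol : PiLp 2 (fun i : Fin m => EuclideanSpace ℝ (Fin (d i))) →
      PiLp 2 (fun i : Fin m => EuclideanSpace ℝ (Fin (d i))))
    (hsol : ∀ θ, sol θ ∈ Θ ∧ ∀ i, (∫ z, G i (sol θ) z ∂(D i θ)) = 0)
    (huniq : ∀ θ, ∀ y ∈ Θ, (∀ i, (∫ z, G i y z ∂(D i θ)) = 0) → y = sol θ)
    -- compatibility condition
    (hcompat : ∑ i, (β i * ε i / α) ^ 2 < 1) :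
    (∀ θ θ', ‖sol θ - sol θ'‖ ≤
        Real.sqrt (∑ i, (β i * ε i / α) ^ 2) * ‖θ - θ'‖) ∧
    (∃! θPS, θPS ∈ Θ ∧ sol θPS = θPS) := by
  set C : ℝ := Real.sqrt (∑ i, (β i * ε i / α) ^ 2) with hCdef
  have hCnonneg : 0 ≤ C := Real.sqrt_nonneg _
  have hC1 : C < 1 := by
    rw [hCdef, show (1 : ℝ) = Real.sqrt 1 by simp]
    exact Real.sqrt_lt_sqrt (by positivity) hcompat
  -- key component bound
  have key : ∀ (i : Fin m) (y θ θ' : MPE m d),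
      ‖(∫ z, G i y z ∂(D i θ)) - (∫ z, G i y z ∂(D i θ'))‖ ≤ β i * ε i * ‖θ - θ'‖ := by
    intro i y θ θ'
    set v := (∫ z, G i y z ∂(D i θ)) - (∫ z, G i y z ∂(D i θ')) with hv
    rcases eq_or_ne v 0 with hv0 | hv0
    · rw [hv0, norm_zero]
      have := hβ i
      have := hε i
      positivity
    have hvpos : 0 < ‖v‖ := norm_pos_iff.mpr hv0
    set u : EuclideanSpace ℝ (Fin (d i)) := ‖v‖⁻¹ • v with hu
    have hunorm : ‖u‖ = 1 := by
      rw [hu, norm_smul, norm_inv, norm_norm, inv_mul_cancel₀ hvpos.ne']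
    set f : Z i → ℝ := fun z => (β i)⁻¹ * inner ℝ u (G i y z) with hf
    have hflip : LipschitzWith 1 f := by
      apply LipschitzWith.of_dist_le_mul
      intro z z'
      rw [NNReal.coe_one, one_mul, Real.dist_eq]
      have hdiff : f z - f z' = (β i)⁻¹ * inner ℝ u (G i y z - G i y z') := by
        rw [hf]; simp [inner_sub_right, mul_sub]
      rw [hdiff, abs_mul, abs_of_nonneg (inv_nonneg.mpr (hβ i).le)]
      calc (β i)⁻¹ * |inner ℝ u (G i y z - G i y z')|
          ≤ (β i)⁻¹ * (‖u‖ * ‖G i y z - G i y z'‖) :=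
            mul_le_mul_of_nonneg_left (abs_real_inner_le_norm _ _)
              (inv_nonneg.mpr (hβ i).le)
        _ ≤ (β i)⁻¹ * (1 * (β i * dist z z')) :=
            mul_le_mul_of_nonneg_left
              (mul_le_mul hunorm.le (hLipz i y z z') (norm_nonneg _) zero_le_one)
              (inv_nonneg.mpr (hβ i).le)
        _ = dist z z' := by rw [one_mul, inv_mul_cancel_left₀ (hβ i).ne']
    have hs := hsens i θ θ' f hflip
    have hcalc : ∀ ϑ : MPE m d,
        (∫ z, f z ∂(D i ϑ)) = (β i)⁻¹ * inner ℝ u (∫ z, G i y z ∂(D i ϑ)) := by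
      intro ϑ
      rw [hf]
      rw [integral_const_mul, integral_inner (hint i y ϑ)]
    rw [hcalc θ, hcalc θ', ← mul_sub, ← inner_sub_right, ← hv] at hs
    have hinner : (inner ℝ u v : ℝ) = ‖v‖ := by
      rw [hu, real_inner_smul_left, real_inner_self_eq_norm_sq]
      field_simp
    rw [hinner] at hs
    have := (hβ i)
    calc ‖v‖ = β i * ((β i)⁻¹ * ‖v‖) := by field_simp
      _ ≤ β i * (ε i * ‖θ - θ'‖) := by gcongr
      _ = β i * ε i * ‖θ - θ'‖ := by ring
  -- the Lipschitz estimate for sol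
  have lip : ∀ θ θ', ‖sol θ - sol θ'‖ ≤ C * ‖θ - θ'‖ := by
    intro θ θ'
    rcases (norm_nonneg (sol θ - sol θ')).eq_or_lt with h0 | h0
    · rw [← h0]; positivity
    have hm := hmono θ (sol θ) (hsol θ).1 (sol θ') (hsol θ').1
    rw [PiLp.inner_apply] at hm
    simp only [PiLp.sub_apply, PiLp.toLp_apply] at hm
    have hbound : ∀ i : Fin m,
        (inner ℝ ((∫ z, G i (sol θ) z ∂(D i θ)) - (∫ z, G i (sol θ') z ∂(D i θ)))
          ((sol θ - sol θ') i) : ℝ)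
        ≤ β i * ε i * ‖θ - θ'‖ * ‖(sol θ - sol θ') i‖ := by
      intro i
      have h1 : (∫ z, G i (sol θ) z ∂(D i θ)) = 0 := (hsol θ).2 i
      have h2 : (∫ z, G i (sol θ') z ∂(D i θ')) = 0 := (hsol θ').2 i
      have hveq : (∫ z, G i (sol θ) z ∂(D i θ)) - (∫ z, G i (sol θ') z ∂(D i θ))
          = (∫ z, G i (sol θ') z ∂(D i θ')) - (∫ z, G i (sol θ') z ∂(D i θ)) := by
        rw [h1, h2]
      rw [hveq]
      calc (inner ℝ ((∫ z, G i (sol θ') z ∂(D i θ')) - (∫ z, G i (sol θ') z ∂(D i θ)))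
            ((sol θ - sol θ') i) : ℝ)
          ≤ ‖(∫ z, G i (sol θ') z ∂(D i θ')) - (∫ z, G i (sol θ') z ∂(D i θ))‖ *
              ‖(sol θ - sol θ') i‖ := real_inner_le_norm _ _
        _ ≤ β i * ε i * ‖θ' - θ‖ * ‖(sol θ - sol θ') i‖ := by
            gcongr
            exact key i (sol θ') θ' θ
        _ = β i * ε i * ‖θ - θ'‖ * ‖(sol θ - sol θ') i‖ := by rw [norm_sub_rev]
    have hsum : (∑ i, (inner ℝ ((∫ z, G i (sol θ) z ∂(D i θ)) -
          (∫ z, G i (sol θ') z ∂(D i θ))) ((sol θ - sol θ') i) : ℝ))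
        ≤ ∑ i, β i * ε i * ‖θ - θ'‖ * ‖(sol θ - sol θ') i‖ :=
      Finset.sum_le_sum fun i _ => hbound i
    -- Cauchy–Schwarz on the sum
    have hCS : (∑ i, β i * ε i * ‖(sol θ - sol θ') i‖)
        ≤ Real.sqrt (∑ i, (β i * ε i) ^ 2) * ‖sol θ - sol θ'‖ := by
      have hsq := Finset.sum_mul_sq_le_sq_mul_sq Finset.univ
        (fun i => β i * ε i) (fun i => ‖(sol θ - sol θ') i‖)
      have hnn : (0 : ℝ) ≤ ∑ i, β i * ε i * ‖(sol θ - sol θ') i‖ :=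
        Finset.sum_nonneg fun i _ =>
          mul_nonneg (mul_nonneg (hβ i).le (hε i)) (norm_nonneg _)
      rw [show (∑ i, β i * ε i * ‖(sol θ - sol θ') i‖)
          = Real.sqrt ((∑ i, β i * ε i * ‖(sol θ - sol θ') i‖) ^ 2) by
        rw [Real.sqrt_sq hnn]]
      have hwsq : (∑ i, ‖(sol θ - sol θ') i‖ ^ 2) = ‖sol θ - sol θ'‖ ^ 2 :=
        (PiLp.norm_sq_eq_of_L2 _ (sol θ - sol θ')).symm
      calc Real.sqrt ((∑ i, β i * ε i * ‖(sol θ - sol θ') i‖) ^ 2)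
          ≤ Real.sqrt ((∑ i, (β i * ε i) ^ 2) * ∑ i, ‖(sol θ - sol θ') i‖ ^ 2) :=
            Real.sqrt_le_sqrt hsq
        _ = Real.sqrt (∑ i, (β i * ε i) ^ 2) * ‖sol θ - sol θ'‖ := by
            rw [hwsq, Real.sqrt_mul (by positivity), Real.sqrt_sq (norm_nonneg _)]
    -- relate the two square roots : sqrt (∑ (βε)²) = α * C
    have hCrel : Real.sqrt (∑ i, (β i * ε i) ^ 2) = α * C := by
      rw [hCdef]
      have hdiv : (∑ i, (β i * ε i / α) ^ 2) = (∑ i, (β i * ε i) ^ 2) / α ^ 2 := by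
        rw [Finset.sum_div]
        congr 1
        ext i
        field_simp
      rw [hdiv, Real.sqrt_div (by positivity), Real.sqrt_sq hα.le]
      field_simp
    -- put everything together
    have hchain : α * ‖sol θ - sol θ'‖ ^ 2 ≤ α * C * ‖θ - θ'‖ * ‖sol θ - sol θ'‖ := by
      calc α * ‖sol θ - sol θ'‖ ^ 2 ≤ _ := hm
        _ ≤ ∑ i, β i * ε i * ‖θ - θ'‖ * ‖(sol θ - sol θ') i‖ := hsum
        _ = ‖θ - θ'‖ * ∑ i, β i * ε i * ‖(sol θ - sol θ') i‖ := by
            rw [Finset.mul_sum]; congr 1; ext i; ring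
        _ ≤ ‖θ - θ'‖ * (Real.sqrt (∑ i, (β i * ε i) ^ 2) * ‖sol θ - sol θ'‖) := by
            gcongr
        _ = α * C * ‖θ - θ'‖ * ‖sol θ - sol θ'‖ := by rw [hCrel]; ring
    have hmul : α * ‖sol θ - sol θ'‖ * ‖sol θ - sol θ'‖
        ≤ (α * C * ‖θ - θ'‖) * ‖sol θ - sol θ'‖ := by
      calc α * ‖sol θ - sol θ'‖ * ‖sol θ - sol θ'‖ = α * ‖sol θ - sol θ'‖ ^ 2 := by ring
        _ ≤ α * C * ‖θ - θ'‖ * ‖sol θ - sol θ'‖ := hchain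
    have h2 := le_of_mul_le_mul_right hmul h0
    have h3 : α * ‖sol θ - sol θ'‖ ≤ α * (C * ‖θ - θ'‖) := by linarith
    linarith [(mul_le_mul_iff_right₀ hα).mp h3]
  refine ⟨lip, ?_⟩
  -- fixed point via Banach
  have hmem : ∀ θ, sol θ ∈ Θ := fun θ => (hsol θ).1
  haveI : Nonempty Θ := hΘne.to_subtype
  haveI : CompleteSpace Θ := hΘcl.completeSpace_coe
  set g : Θ → Θ := fun x => ⟨sol x, hmem x⟩ with hg
  have hcontr : ContractingWith C.toNNReal g := by
    constructor
    · rwa [← NNReal.coe_lt_one, Real.coe_toNNReal _ hCnonneg]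
    · apply LipschitzWith.of_dist_le_mul
      intro x y
      rw [Real.coe_toNNReal _ hCnonneg, Subtype.dist_eq, Subtype.dist_eq,
        dist_eq_norm, dist_eq_norm]
      exact lip x y
  set x := ContractingWith.fixedPoint g hcontr with hx
  refine ⟨x.val, ⟨x.2, ?_⟩, ?_⟩
  · exact congrArg Subtype.val hcontr.fixedPoint_isFixedPt
  · rintro y ⟨hyΘ, hy⟩
    have hfix : Function.IsFixedPt g ⟨y, hyΘ⟩ := Subtype.ext hy
    exact congrArg Subtype.val (hcontr.fixedPoint_unique hfix)
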